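/- Face truncation commutes with products: for simple polytopes P and Q and a face E of P, the polytope Π_E(P) × Q is combinatorially equivalent to Π_{E×Q}(P × Q), and symmetrically P × Π_F(Q) is combinatorially equivalent to Π_{P×F}(P × Q) for a face F of Q. -/

import Mathlib

open Set

/-- The poset of (exposed) faces of a subset of a real topological vector space,
ordered by inclusion.  For polytopes this is the face lattice, so an order
isomorphism of face posets is a combinatorial equivalence. -/
def facePoset {E : Type*} [AddCommMonoid E] [Module ℝ E] [TopologicalSpace E]
    (P : Set E) : Type _ :=
  {F : Set E // IsExposed ℝ P F}

instance {E : Type*} [AddCommMonoid E] [Module ℝ E] [TopologicalSpace E]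
    (P : Set E) : PartialOrder (facePoset P) :=
  Subtype.partialOrder _

/-- Transport of face posets along an equality of sets. -/
def facePoset_congr {E : Type*} [AddCommMonoid E] [Module ℝ E] [TopologicalSpace E]
    {s t : Set E} (h : s = t) : facePoset s ≃o facePoset t := by
  subst h; exact OrderIso.refl _

namespace TruncProof


variable {V : Type*} [NormedAddCommGroup V] [NormedSpace ℝ V] [FiniteDimensional ℝ V]
variable {ι : Type*} [Fintype ι]

/-- The polyhedron given by a finite family of linear inequalities. -/
def pol (f : ι → V →ₗ[ℝ] ℝ) (b : ι → ℝ) : Set V := {x | ∀ i, f i x ≤ b i}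

/-- The subset where the constraints in `S` are active. -/
def Ff (f : ι → V →ₗ[ℝ] ℝ) (b : ι → ℝ) (S : Set ι) : Set V :=
  {x | x ∈ pol f b ∧ ∀ i ∈ S, f i x = b i}

/-- The vertices (extreme points) lying on `Ff f b S`. -/
def W (f : ι → V →ₗ[ℝ] ℝ) (b : ι → ℝ) (S : Set ι) : Set V :=
  extremePoints ℝ (pol f b) ∩ Ff f b S

variable (f : ι → V →ₗ[ℝ] ℝ) (b : ι → ℝ)

theorem convex_pol : Convex ℝ (pol f b) := by
  intro x hx y hy a c ha hc hac i
  have h1 := hx i; have h2 := hy i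
  have h3 : f i (a • x + c • y) = a * f i x + c * f i y := by
    simp [map_add, map_smul, smul_eq_mul]
  rw [h3]
  have e : a * b i + c * b i = b i := by linear_combination (b i) * hac
  linarith [mul_le_mul_of_nonneg_left h1 ha, mul_le_mul_of_nonneg_left h2 hc]

theorem Ff_subset (S : Set ι) : Ff f b S ⊆ pol f b := fun _ h => h.1

theorem convex_Ff (S : Set ι) : Convex ℝ (Ff f b S) := by
  intro x hx y hy a c ha hc hac
  refine ⟨convex_pol f b hx.1 hy.1 ha hc hac, fun i hi => ?_⟩
  have h3 : f i (a • x + c • y) = a * f i x + c * f i y := by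
    simp [map_add, map_smul, smul_eq_mul]
  rw [h3, hx.2 i hi, hy.2 i hi]
  linear_combination (b i) * hac

theorem isClosed_Ff (S : Set ι) : IsClosed (Ff f b S) := by
  have h1 : IsClosed (pol f b) := by
    have : pol f b = ⋂ i, {x | f i x ≤ b i} := by ext x; simp [pol]
    rw [this]
    exact isClosed_iInter fun i =>
      isClosed_le (f i).continuous_of_finiteDimensional continuous_const
  have h2 : IsClosed {x : V | ∀ i ∈ S, f i x = b i} := by
    have : {x : V | ∀ i ∈ S, f i x = b i} = ⋂ i ∈ S, {x | f i x = b i} := by ext x; simp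
    rw [this]
    exact isClosed_biInter fun i _ =>
      isClosed_eq (f i).continuous_of_finiteDimensional continuous_const
  have : Ff f b S = pol f b ∩ {x : V | ∀ i ∈ S, f i x = b i} := rfl
  rw [this]; exact h1.inter h2

theorem isExtreme_Ff (S : Set ι) : IsExtreme ℝ (pol f b) (Ff f b S) := by
  refine ⟨Ff_subset f b S, ?_⟩
  rintro x₁ hx₁ x₂ hx₂ x ⟨hxp, hxS⟩ ⟨a, c, ha, hc, hac, hx⟩
  have key : ∀ i ∈ S, f i x₁ = b i ∧ f i x₂ = b i := by
    intro i hi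
    have h1 := hx₁ i; have h2 := hx₂ i
    have h3 : a * f i x₁ + c * f i x₂ = b i := by
      have : f i (a • x₁ + c • x₂) = a * f i x₁ + c * f i x₂ := by
        simp [map_add, map_smul, smul_eq_mul]
      rw [← this, hx, hxS i hi]
    have e1 : a * (b i - f i x₁) + c * (b i - f i x₂) = 0 := by
      linear_combination (b i) * hac - h3
    have t1 : 0 ≤ a * (b i - f i x₁) := mul_nonneg ha.le (by linarith)
    have t2 : 0 ≤ c * (b i - f i x₂) := mul_nonneg hc.le (by linarith)
    have z1 : a * (b i - f i x₁) = 0 := by linarith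
    have z2 : c * (b i - f i x₂) = 0 := by linarith
    constructor
    · rcases mul_eq_zero.1 z1 with h | h
      · exact absurd h (ne_of_gt ha)
      · linarith
    · rcases mul_eq_zero.1 z2 with h | h
      · exact absurd h (ne_of_gt hc)
      · linarith
  exact ⟨hx₁, fun i hi => (key i hi).1⟩

theorem finite_extremePoints : (extremePoints ℝ (pol f b)).Finite := by
  have hinj : InjOn (fun x => {i | f i x = b i}) (extremePoints ℝ (pol f b)) := by
    intro x hx y hy hxy
    by_contra hne
    set v := y - x with hv
    -- active sets agree; find ε
    have hxy' : {i | f i x = b i} = {i | f i y = b i} := hxy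
    have hact : ∀ i, f i x = b i → f i v = 0 := by
      intro i hi
      have h2 : i ∈ {i | f i y = b i} := hxy' ▸ (hi : i ∈ {i | f i x = b i})
      have h3 : f i y = b i := h2
      simp [hv, map_sub, h3, hi]
    have hex : ∀ i, ∃ ε : ℝ, 0 < ε ∧ (f i x + ε * |f i v| ≤ b i) := by
      intro i
      by_cases hi : f i x = b i
      · exact ⟨1, one_pos, by simp [hact i hi, hi]⟩
      · have hlt : f i x < b i := lt_of_le_of_ne (hx.1 i) hi
        refine ⟨(b i - f i x) / (|f i v| + 1), div_pos (by linarith) (by positivity), ?_⟩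
        have h1 : |f i v| + 1 > 0 := by positivity
        have h2 : (b i - f i x) / (|f i v| + 1) * |f i v| ≤ b i - f i x := by
          rw [div_mul_eq_mul_div, div_le_iff₀ h1]
          have := abs_nonneg (f i v)
          nlinarith
        linarith
    choose εs hεs0 hεs using hex
    set T : Finset ℝ := insert 1 (Finset.univ.image εs) with hT
    have hTne : T.Nonempty := ⟨1, Finset.mem_insert_self _ _⟩
    set ε := T.min' hTne with hε
    have hε0 : 0 < ε := by
      have hmem := T.min'_mem hTne
      rw [← hε] at hmem
      rcases Finset.mem_insert.1 hmem with h | h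
      · rw [h]; exact one_pos
      · obtain ⟨i, _, hi⟩ := Finset.mem_image.1 h
        rw [← hi]; exact hεs0 i
    have hεle : ∀ i, ε ≤ εs i := fun i =>
      Finset.min'_le _ _ (Finset.mem_insert.2 (Or.inr (Finset.mem_image_of_mem _ (Finset.mem_univ i))))
    have hmem : ∀ (s : ℝ), |s| ≤ ε → x + s • v ∈ pol f b := by
      intro s hs i
      have : f i (x + s • v) = f i x + s * f i v := by simp [map_add, map_smul, smul_eq_mul]
      rw [this]
      have h1 : s * f i v ≤ |s| * |f i v| := by
        calc s * f i v ≤ |s * f i v| := le_abs_self _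
        _ = |s| * |f i v| := abs_mul _ _
      have h2 : |s| * |f i v| ≤ ε * |f i v| := by
        have := abs_nonneg (f i v); nlinarith
      have h3 : ε * |f i v| ≤ εs i * |f i v| := by
        have := abs_nonneg (f i v); nlinarith [hεle i]
      have h4 := hεs i
      have h5 : εs i * |f i v| ≤ b i - f i x := by linarith
      linarith
    have h1 : x + ε • v ∈ pol f b := hmem ε (by rw [abs_of_pos hε0])
    have h2 : x + (-ε) • v ∈ pol f b := hmem (-ε) (by rw [abs_neg, abs_of_pos hε0])
    have hseg : x ∈ openSegment ℝ (x + (-ε) • v) (x + ε • v) := by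
      refine ⟨1/2, 1/2, by norm_num, by norm_num, by norm_num, ?_⟩
      rw [smul_add, smul_add]
      rw [smul_smul, smul_smul]
      module
    have := hx.2 h2 h1 hseg
    have hzero : (ε : ℝ) • v = 0 := by
      have h := this
      have : x + (-ε) • v - x = 0 := by rw [h]; abel
      calc (ε : ℝ) • v = -(x + (-ε) • v - x) := by rw [neg_smul]; abel
      _ = 0 := by rw [this, neg_zero]
    have hv0 : v = 0 := by
      rcases smul_eq_zero.1 hzero with h | h
      · exact absurd h (ne_of_gt hε0)
      · exact h
    apply hne
    have : y - x = 0 := hv0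
    have := sub_eq_zero.1 this
    exact this.symm ▸ rfl
  have : Finite (Set ι) := by infer_instance
  exact Set.Finite.of_finite_image (Set.toFinite _) hinj

theorem Ff_eq_hull (hcpt : IsCompact (pol f b)) (S : Set ι) :
    Ff f b S = convexHull ℝ (W f b S) := by
  have hcpt' : IsCompact (Ff f b S) :=
    hcpt.of_isClosed_subset (isClosed_Ff f b S) (Ff_subset f b S)
  have hext : extremePoints ℝ (Ff f b S) = W f b S := by
    ext x
    constructor
    · rintro ⟨hxF, hseg⟩
      refine ⟨⟨Ff_subset f b S hxF, ?_⟩, hxF⟩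
      intro y hy z hz hx
      have hmem := (isExtreme_Ff f b S).2 hy hz hxF hx
      exact hseg hmem ((isExtreme_Ff f b S).right_mem_of_mem_openSegment hy hz hxF hx) hx
    · rintro ⟨⟨hxp, hseg⟩, hxF⟩
      exact ⟨hxF, fun y hy z hz hx => hseg (Ff_subset f b S hy) (Ff_subset f b S hz) hx⟩
  have hKM := closure_convexHull_extremePoints hcpt' (convex_Ff f b S)
  rw [hext] at hKM
  have hfin : (W f b S).Finite := (finite_extremePoints f b).subset (inter_subset_left)
  rw [← hKM, IsClosed.closure_eq (hfin.isClosed_convexHull ℝ)]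

/-- Every nonempty exposed face of a polyhedron is the set of points where the
constraints that are globally tight on the face are active. -/
theorem exposed_rep {A : Set V} (hA : IsExposed ℝ (pol f b) A) (hne : A.Nonempty) :
    A = {x | x ∈ pol f b ∧ ∀ i, (∀ y ∈ A, f i y = b i) → f i x = b i} := by
  classical
  obtain ⟨l, hl⟩ := hA hne
  obtain ⟨x₀, hx₀A⟩ := hne
  have hAsub : A ⊆ pol f b := by rw [hl]; exact fun x hx => hx.1
  have hAmax : ∀ x ∈ A, ∀ y ∈ pol f b, l y ≤ l x := by
    rw [hl]; exact fun x hx => hx.2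
  set σ : Set ι := {i | ∀ y ∈ A, f i y = b i} with hσ
  have hwit : ∀ i : ι, ∃ z, z ∈ A ∧ (i ∉ σ → f i z < b i) := by
    intro i
    by_cases hi : i ∈ σ
    · exact ⟨x₀, hx₀A, fun h => absurd hi h⟩
    · have hex : ∃ y ∈ A, f i y ≠ b i := by
        by_contra h; push_neg at h; exact hi (fun y hy => h y hy)
      obtain ⟨y, hyA, hyne⟩ := hex
      exact ⟨y, hyA, fun _ => lt_of_le_of_ne (hAsub hyA i) hyne⟩
  choose zz hzzA hzz using hwit
  have hAconv : Convex ℝ A := by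
    rw [hl]
    intro x hx y hy a c ha hc hac
    refine ⟨convex_pol f b hx.1 hy.1 ha hc hac, fun z hz => ?_⟩
    have hll : l (a • x + c • y) = a * l x + c * l y := by
      simp [map_add, map_smul, smul_eq_mul]
    rw [hll]
    have e : a * l z + c * l z = l z := by linear_combination (l z) * hac
    linarith [mul_le_mul_of_nonneg_left (hx.2 z hz) ha,
      mul_le_mul_of_nonneg_left (hy.2 z hz) hc]
  set N : ℝ := ((Fintype.card ι + 1 : ℕ) : ℝ) with hNdef
  have hN : 0 < N := by
    rw [hNdef]; exact_mod_cast Nat.succ_pos _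
  set z' : Option ι → V := fun o => o.elim x₀ zz with hz'
  have hz'A : ∀ o, z' o ∈ A := by rintro (_ | i); exacts [hx₀A, hzzA i]
  set xb : V := ∑ o : Option ι, (N⁻¹ : ℝ) • z' o with hxb
  have hxbA : xb ∈ A := by
    rw [hxb]
    refine hAconv.sum_mem (fun o _ => by positivity) ?_ (fun o _ => hz'A o)
    rw [Finset.sum_const, Finset.card_univ, Fintype.card_option, nsmul_eq_mul]
    show N * N⁻¹ = 1
    exact mul_inv_cancel₀ (ne_of_gt hN)
  have happ : ∀ (φ : V →ₗ[ℝ] ℝ), φ xb = ∑ o : Option ι, N⁻¹ * φ (z' o) := by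
    intro φ
    rw [hxb, map_sum]
    exact Finset.sum_congr rfl fun o _ => by simp [map_smul, smul_eq_mul]
  have hxb_lt : ∀ i, i ∉ σ → f i xb < b i := by
    intro i hi
    rw [happ (f i)]
    have hlt : ∑ o : Option ι, N⁻¹ * f i (z' o) < ∑ _o : Option ι, N⁻¹ * b i := by
      refine Finset.sum_lt_sum (fun o _ => ?_) ⟨some i, Finset.mem_univ _, ?_⟩
      · exact mul_le_mul_of_nonneg_left (hAsub (hz'A o) i) (by positivity)
      · have : f i (zz i) < b i := hzz i hi
        have hz'i : z' (some i) = zz i := rfl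
        rw [hz'i]
        exact mul_lt_mul_of_pos_left this (by positivity)
    have hsum : ∑ _o : Option ι, N⁻¹ * b i = b i := by
      rw [Finset.sum_const, Finset.card_univ, Fintype.card_option, nsmul_eq_mul, hNdef]
      field_simp
    linarith [hlt.trans_le hsum.le]
  have hxb_eq : ∀ i, i ∈ σ → f i xb = b i := fun i hi => hi xb hxbA
  apply Subset.antisymm
  · exact fun x hxA => ⟨hAsub hxA, fun i hi => hi x hxA⟩
  · rintro y ⟨hyp, hyσ⟩
    have hts : ∀ i : ι, ∃ t : ℝ, 0 < t ∧ (i ∉ σ → t * (f i xb - f i y) ≤ b i - f i xb) := by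
      intro i
      by_cases hi : i ∈ σ
      · exact ⟨1, one_pos, fun h => absurd hi h⟩
      · have hlt : f i xb < b i := hxb_lt i hi
        refine ⟨(b i - f i xb) / (|f i xb - f i y| + 1),
          div_pos (by linarith) (by positivity), fun _ => ?_⟩
        have h1 : (0:ℝ) < |f i xb - f i y| + 1 := by positivity
        have h2 : (b i - f i xb) / (|f i xb - f i y| + 1) * (f i xb - f i y)
            ≤ (b i - f i xb) / (|f i xb - f i y| + 1) * (|f i xb - f i y| + 1) := by
          refine mul_le_mul_of_nonneg_left ?_ (le_of_lt (div_pos (by linarith) h1))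
          linarith [le_abs_self (f i xb - f i y)]
        rw [div_mul_cancel₀ _ (ne_of_gt h1)] at h2
        linarith
    choose ts hts0 htsle using hts
    set T : Finset ℝ := insert 1 (Finset.univ.image ts) with hT
    have hTne : T.Nonempty := ⟨1, Finset.mem_insert_self _ _⟩
    set t := T.min' hTne with htdef
    have ht0 : 0 < t := by
      have hmem := T.min'_mem hTne
      rw [← htdef] at hmem
      rcases Finset.mem_insert.1 hmem with h | h
      · rw [h]; exact one_pos
      · obtain ⟨i, _, hi⟩ := Finset.mem_image.1 h
        rw [← hi]; exact hts0 i
    have htle : ∀ i, t ≤ ts i := fun i =>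
      Finset.min'_le _ _ (Finset.mem_insert.2 (Or.inr
        (Finset.mem_image_of_mem _ (Finset.mem_univ i))))
    set zt : V := xb + t • (xb - y) with hztdef
    have happz : ∀ (φ : V →ₗ[ℝ] ℝ), φ zt = φ xb + t * (φ xb - φ y) := by
      intro φ; simp [hztdef, map_add, map_smul, map_sub, smul_eq_mul]
    have hztpol : zt ∈ pol f b := by
      intro i
      rw [happz (f i)]
      by_cases hi : i ∈ σ
      · have e1 : f i xb = b i := hxb_eq i hi
        have e2 : f i y = b i := hyσ i hi
        rw [e1, e2]; simp
      · have hb := htsle i hi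
        rcases le_or_gt 0 (f i xb - f i y) with hD | hD
        · have : t * (f i xb - f i y) ≤ ts i * (f i xb - f i y) :=
            mul_le_mul_of_nonneg_right (htle i) hD
          linarith
        · have : t * (f i xb - f i y) < 0 := mul_neg_of_pos_of_neg ht0 hD
          have := hxb_lt i hi
          linarith
    have h5 : l zt ≤ l xb := hAmax xb hxbA zt hztpol
    have h6 : l zt = l xb + t * (l xb - l y) := happz l
    have h7 : l xb ≤ l y := by nlinarith
    rw [hl]
    exact ⟨hyp, fun w hw => le_trans (hAmax xb hxbA w hw) h7⟩


section Faces

def trunc (g : V →ₗ[ℝ] ℝ) (d : ℝ) : Set V := {x | x ∈ pol f b ∧ g x ≤ d}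

def Face (S : Set ι) (γ : Prop) (g : V →ₗ[ℝ] ℝ) (d : ℝ) : Set V :=
  {x | x ∈ Ff f b S ∧ g x ≤ d ∧ (γ → g x = d)}

def sig (A : Set V) : Set ι := {i | ∀ x ∈ A, f i x = b i}

def sigV (S : Set ι) : Set ι := {i | ∀ w ∈ W f b S, f i w = b i}

end Faces

def gam {V : Type*} [NormedAddCommGroup V] [NormedSpace ℝ V]
    (g : V →ₗ[ℝ] ℝ) (d : ℝ) (A : Set V) : Prop := ∀ x ∈ A, g x = d

section FaceLemmas

variable (g : V →ₗ[ℝ] ℝ) (d : ℝ)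

theorem face_congr {S : Set ι} {γ γ' : Prop} (h : γ ↔ γ') :
    Face f b S γ g d = Face f b S γ' g d := by
  ext x; unfold Face; rw [h]

theorem face_subset_trunc {S : Set ι} {γ : Prop} :
    Face f b S γ g d ⊆ trunc f b g d :=
  fun x hx => ⟨Ff_subset f b S hx.1, hx.2.1⟩

theorem cross_mem {S : Set ι} {u v : V} (hu : u ∈ Ff f b S) (hv : v ∈ Ff f b S)
    (h1 : g u < d) (h2 : d < g v) :
    ∃ t : ℝ, 0 < t ∧ t < 1 ∧ (1-t) • u + t • v ∈ Ff f b S ∧ g ((1-t) • u + t • v) = d := by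
  have hden : 0 < g v - g u := by linarith
  set t := (d - g u)/(g v - g u) with htdef
  have ht0 : 0 < t := div_pos (by linarith) hden
  have ht1 : t < 1 := (div_lt_one hden).2 (by linarith)
  refine ⟨t, ht0, ht1, convex_Ff f b S hu hv (by linarith) (le_of_lt ht0) (by ring), ?_⟩
  have hgv : g ((1-t) • u + t • v) = (1-t) * g u + t * g v := by
    simp [map_add, map_smul, smul_eq_mul]
  rw [hgv]
  have e : t * (g v - g u) = d - g u := div_mul_cancel₀ _ (ne_of_gt hden)
  linear_combination e

theorem lt_on_Ff (hcpt : IsCompact (pol f b)) {S : Set ι} (h : ∀ w ∈ W f b S, g w < d) :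
    ∀ x ∈ Ff f b S, g x < d := by
  intro x hx
  rw [Ff_eq_hull f b hcpt S] at hx
  exact convexHull_min h (convex_halfSpace_lt (LinearMap.isLinear g) d) hx

theorem gt_on_Ff (hcpt : IsCompact (pol f b)) {S : Set ι} (h : ∀ w ∈ W f b S, d < g w) :
    ∀ x ∈ Ff f b S, d < g x := by
  intro x hx
  rw [Ff_eq_hull f b hcpt S] at hx
  exact convexHull_min h (convex_halfSpace_gt (LinearMap.isLinear g) d) hx

theorem eq_on_Ff (hcpt : IsCompact (pol f b)) {φ : V →ₗ[ℝ] ℝ} {r : ℝ} {S : Set ι} (h : ∀ w ∈ W f b S, φ w = r) :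
    ∀ x ∈ Ff f b S, φ x = r := by
  intro x hx
  rw [Ff_eq_hull f b hcpt S] at hx
  exact convexHull_min h (convex_hyperplane (LinearMap.isLinear φ) r) hx

theorem ne_false_iff (hcpt : IsCompact (pol f b)) (hadm : ∀ w ∈ extremePoints ℝ (pol f b), g w ≠ d) {S : Set ι} :
    (Face f b S False g d).Nonempty ↔ ∃ w ∈ W f b S, g w < d := by
  constructor
  · rintro ⟨x, hxF, hxle, -⟩
    by_contra h
    push_neg at h
    have hgt : ∀ w ∈ W f b S, d < g w := fun w hw =>
      lt_of_le_of_ne (h w hw) (Ne.symm (hadm w hw.1))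
    exact absurd hxle (not_le.2 (gt_on_Ff f b g d hcpt hgt x hxF))
  · rintro ⟨w, hw, hlt⟩
    exact ⟨w, hw.2, le_of_lt hlt, fun h => h.elim⟩

theorem ne_true_iff (hcpt : IsCompact (pol f b)) (hadm : ∀ w ∈ extremePoints ℝ (pol f b), g w ≠ d) {S : Set ι} :
    (Face f b S True g d).Nonempty ↔
      (∃ w ∈ W f b S, g w < d) ∧ (∃ w ∈ W f b S, d < g w) := by
  constructor
  · rintro ⟨x, hxF, hxle, hxeq⟩
    have hxd : g x = d := hxeq trivial
    constructor
    · by_contra h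
      push_neg at h
      have hgt : ∀ w ∈ W f b S, d < g w := fun w hw =>
        lt_of_le_of_ne (h w hw) (Ne.symm (hadm w hw.1))
      exact absurd hxd (ne_of_gt (gt_on_Ff f b g d hcpt hgt x hxF))
    · by_contra h
      push_neg at h
      have hlt : ∀ w ∈ W f b S, g w < d := fun w hw =>
        lt_of_le_of_ne (h w hw) (hadm w hw.1)
      exact absurd hxd (ne_of_lt (lt_on_Ff f b g d hcpt hlt x hxF))
  · rintro ⟨⟨u, hu, hult⟩, ⟨v, hv, hvgt⟩⟩
    obtain ⟨t, ht0, ht1, hmem, heq⟩ := cross_mem f b g d hu.2 hv.2 hult hvgt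
    exact ⟨(1-t) • u + t • v, hmem, le_of_eq heq, fun _ => heq⟩

theorem sig_mem_of_W (hcpt : IsCompact (pol f b)) {S : Set ι} {i : ι} (h : ∀ w ∈ W f b S, f i w = b i) :
    ∀ x ∈ Ff f b S, f i x = b i :=
  eq_on_Ff f b hcpt h

theorem sig_face_false (hcpt : IsCompact (pol f b)) (hadm : ∀ w ∈ extremePoints ℝ (pol f b), g w ≠ d) {S : Set ι} (hne : (Face f b S False g d).Nonempty) :
    sig f b (Face f b S False g d) = sigV f b S := by
  obtain ⟨u, hu, hult⟩ := (ne_false_iff f b g d hcpt hadm).1 hne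
  ext i
  simp only [sig, sigV, mem_setOf_eq]
  constructor
  · -- contrapositive : some vertex has slack, produce a point in the face with slack
    intro hall
    by_contra hns
    push_neg at hns
    obtain ⟨v, hv, hvne⟩ := hns
    have hvlt : f i v < b i := lt_of_le_of_ne (hv.2.1 i) hvne
    rcases lt_or_gt_of_ne (hadm v hv.1) with hvd | hvd
    · -- v itself in the face
      have : f i v = b i := hall v ⟨hv.2, le_of_lt hvd, fun h => h.elim⟩
      exact absurd this (ne_of_lt hvlt)
    · -- cross from u to v
      by_cases hui : f i u < b i
      · have : f i u = b i := hall u ⟨hu.2, le_of_lt hult, fun h => h.elim⟩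
        exact absurd this (ne_of_lt hui)
      · have huieq : f i u = b i := le_antisymm (hu.2.1 i) (not_lt.1 hui)
        obtain ⟨t, ht0, ht1, hmem, heq⟩ := cross_mem f b g d hu.2 hv.2 hult hvd
        have hFp : (1-t) • u + t • v ∈ Face f b S False g d :=
          ⟨hmem, le_of_eq heq, fun h => h.elim⟩
        have happ : f i ((1-t) • u + t • v) = (1-t) * f i u + t * f i v := by
          simp [map_add, map_smul, smul_eq_mul]
        have : f i ((1-t) • u + t • v) = b i := hall _ hFp
        rw [happ, huieq] at this
        nlinarith
  · intro h x hx
    exact sig_mem_of_W f b hcpt h x hx.1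

theorem sig_face_true (hcpt : IsCompact (pol f b)) (hadm : ∀ w ∈ extremePoints ℝ (pol f b), g w ≠ d) {S : Set ι} (hne : (Face f b S True g d).Nonempty) :
    sig f b (Face f b S True g d) = sigV f b S := by
  obtain ⟨⟨u, hu, hult⟩, ⟨v, hv, hvgt⟩⟩ := (ne_true_iff f b g d hcpt hadm).1 hne
  ext i
  simp only [sig, sigV, mem_setOf_eq]
  constructor
  · intro hall
    by_contra hns
    push_neg at hns
    obtain ⟨w, hw, hwne⟩ := hns
    have hwlt : f i w < b i := lt_of_le_of_ne (hw.2.1 i) hwne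
    rcases lt_or_gt_of_ne (hadm w hw.1) with hwd | hwd
    · -- w below: cross w to v
      obtain ⟨t, ht0, ht1, hmem, heq⟩ := cross_mem f b g d hw.2 hv.2 hwd hvgt
      have hFp : (1-t) • w + t • v ∈ Face f b S True g d := ⟨hmem, le_of_eq heq, fun _ => heq⟩
      have happ : f i ((1-t) • w + t • v) = (1-t) * f i w + t * f i v := by
        simp [map_add, map_smul, smul_eq_mul]
      have heqb : f i ((1-t) • w + t • v) = b i := hall _ hFp
      rw [happ] at heqb
      nlinarith [hv.2.1 i]
    · -- w above: cross u to w
      obtain ⟨t, ht0, ht1, hmem, heq⟩ := cross_mem f b g d hu.2 hw.2 hult hwd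
      have hFp : (1-t) • u + t • w ∈ Face f b S True g d := ⟨hmem, le_of_eq heq, fun _ => heq⟩
      have happ : f i ((1-t) • u + t • w) = (1-t) * f i u + t * f i w := by
        simp [map_add, map_smul, smul_eq_mul]
      have heqb : f i ((1-t) • u + t • w) = b i := hall _ hFp
      rw [happ] at heqb
      nlinarith [hu.2.1 i]
  · intro h x hx
    exact sig_mem_of_W f b hcpt h x hx.1

theorem gam_face_true {S : Set ι} : gam g d (Face f b S True g d) :=
  fun _ hx => hx.2.2 trivial

theorem gam_face_false (hcpt : IsCompact (pol f b)) (hadm : ∀ w ∈ extremePoints ℝ (pol f b), g w ≠ d) {S : Set ι} (hne : (Face f b S False g d).Nonempty) :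
    ¬ gam g d (Face f b S False g d) := by
  obtain ⟨u, hu, hult⟩ := (ne_false_iff f b g d hcpt hadm).1 hne
  intro hgam
  have : g u = d := hgam u ⟨hu.2, le_of_lt hult, fun h => h.elim⟩
  exact absurd this (ne_of_lt hult)

end FaceLemmas

section Stage4

theorem exposed_empty (K : Set V) : IsExposed ℝ K (∅ : Set V) :=
  fun h => absurd h (by simp)

theorem exposed_face (g : V →ₗ[ℝ] ℝ) (d : ℝ) {S : Set ι} {γ : Prop}
    (hne : (Face f b S γ g d).Nonempty) :
    IsExposed ℝ (trunc f b g d) (Face f b S γ g d) := by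
  classical
  intro _
  obtain ⟨w, hw⟩ := hne
  set Sfin : Finset ι := (Set.toFinite S).toFinset with hSfin
  have hmemS : ∀ i, i ∈ Sfin ↔ i ∈ S := fun i => Set.Finite.mem_toFinset _
  by_cases hγ : γ
  · set L : V →ₗ[ℝ] ℝ := (∑ i ∈ Sfin, f i) + g with hL
    refine ⟨LinearMap.toContinuousLinearMap L, ?_⟩
    have happ : ∀ x, L x = (∑ i ∈ Sfin, f i x) + g x := by
      intro x; simp [hL, LinearMap.sum_apply]
    have hub : ∀ x ∈ trunc f b g d, L x ≤ (∑ i ∈ Sfin, b i) + d := by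
      rintro x ⟨hxp, hxg⟩
      rw [happ]
      exact add_le_add (Finset.sum_le_sum fun i _ => hxp i) hxg
    have hwL : L w = (∑ i ∈ Sfin, b i) + d := by
      rw [happ, hw.2.2 hγ]
      congr 1
      exact Finset.sum_congr rfl fun i hi => hw.1.2 i ((hmemS i).1 hi)
    ext x
    simp only [mem_setOf_eq, LinearMap.coe_toContinuousLinearMap']
    constructor
    · rintro ⟨hxF, hxg, hxeq⟩
      refine ⟨⟨hxF.1, hxg⟩, fun y hy => ?_⟩
      calc L y ≤ (∑ i ∈ Sfin, b i) + d := hub y hy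
      _ = L x := by
          rw [happ, hxeq hγ]
          congr 1
          exact (Finset.sum_congr rfl fun i hi => (hxF.2 i ((hmemS i).1 hi))).symm
    · rintro ⟨hxt, hmax⟩
      have h2 : L x = (∑ i ∈ Sfin, b i) + d :=
        le_antisymm (hub x hxt) (hwL ▸ hmax w (face_subset_trunc f b g d hw))
      rw [happ] at h2
      have h3 : (∑ i ∈ Sfin, f i x) ≤ ∑ i ∈ Sfin, b i :=
        Finset.sum_le_sum fun i _ => hxt.1 i
      have h5 : (∑ i ∈ Sfin, f i x) = ∑ i ∈ Sfin, b i := by linarith [hxt.2]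
      have h6 : g x = d := by linarith
      have h7 : ∀ i ∈ Sfin, f i x = b i :=
        (Finset.sum_eq_sum_iff_of_le fun i _ => hxt.1 i).1 h5
      exact ⟨⟨hxt.1, fun i hi => h7 i ((hmemS i).2 hi)⟩, hxt.2, fun _ => h6⟩
  · set L : V →ₗ[ℝ] ℝ := (∑ i ∈ Sfin, f i) with hL
    refine ⟨LinearMap.toContinuousLinearMap L, ?_⟩
    have happ : ∀ x, L x = (∑ i ∈ Sfin, f i x) := by
      intro x; simp [hL, LinearMap.sum_apply]
    have hub : ∀ x ∈ trunc f b g d, L x ≤ (∑ i ∈ Sfin, b i) := by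
      rintro x ⟨hxp, hxg⟩
      rw [happ]
      exact Finset.sum_le_sum fun i _ => hxp i
    have hwL : L w = (∑ i ∈ Sfin, b i) := by
      rw [happ]
      exact Finset.sum_congr rfl fun i hi => hw.1.2 i ((hmemS i).1 hi)
    ext x
    simp only [mem_setOf_eq, LinearMap.coe_toContinuousLinearMap']
    constructor
    · rintro ⟨hxF, hxg, hxeq⟩
      refine ⟨⟨hxF.1, hxg⟩, fun y hy => ?_⟩
      calc L y ≤ (∑ i ∈ Sfin, b i) := hub y hy
      _ = L x := by
          rw [happ]
          exact (Finset.sum_congr rfl fun i hi => (hxF.2 i ((hmemS i).1 hi))).symm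
    · rintro ⟨hxt, hmax⟩
      have h2 : L x = (∑ i ∈ Sfin, b i) :=
        le_antisymm (hub x hxt) (hwL ▸ hmax w (face_subset_trunc f b g d hw))
      rw [happ] at h2
      have h7 : ∀ i ∈ Sfin, f i x = b i :=
        (Finset.sum_eq_sum_iff_of_le fun i _ => hxt.1 i).1 h2
      exact ⟨⟨hxt.1, fun i hi => h7 i ((hmemS i).2 hi)⟩, hxt.2, fun h => absurd h hγ⟩

theorem trunc_eq_pol (g : V →ₗ[ℝ] ℝ) (d : ℝ) :
    trunc f b g d = pol (Sum.elim f fun _ : Unit => g) (Sum.elim b fun _ => d) := by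
  ext x
  constructor
  · rintro ⟨h1, h2⟩ (i | u)
    · exact h1 i
    · exact h2
  · intro h
    exact ⟨fun i => h (Sum.inl i), h (Sum.inr ())⟩

theorem rep {g : V →ₗ[ℝ] ℝ} {d : ℝ} {A : Set V}
    (hA : IsExposed ℝ (trunc f b g d) A) (hne : A.Nonempty) :
    A = Face f b (sig f b A) (gam g d A) g d := by
  have hA' : IsExposed ℝ
      (pol (Sum.elim f fun _ : Unit => g) (Sum.elim b fun _ => d)) A := by
    rw [← trunc_eq_pol]; exact hA
  have h := exposed_rep _ _ hA' hne
  conv_lhs => rw [h]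
  ext x
  constructor
  · rintro ⟨hp, hall⟩
    exact ⟨⟨fun i => hp (Sum.inl i), fun i hi => hall (Sum.inl i) hi⟩,
      hp (Sum.inr ()), fun hg => hall (Sum.inr ()) hg⟩
  · rintro ⟨⟨hxp, hxS⟩, hxg, hxγ⟩
    constructor
    · rintro (i | u)
      · exact hxp i
      · exact hxg
    · rintro (i | u) hcond
      · exact hxS i hcond
      · exact hxγ hcond

theorem sig_face (g : V →ₗ[ℝ] ℝ) (d : ℝ) (hcpt : IsCompact (pol f b))
    (hadm : ∀ w ∈ extremePoints ℝ (pol f b), g w ≠ d) {S : Set ι} {γ : Prop}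
    (hne : (Face f b S γ g d).Nonempty) :
    sig f b (Face f b S γ g d) = sigV f b S := by
  by_cases hγ : γ
  · rw [face_congr f b g d (iff_of_true hγ trivial)] at hne ⊢
    exact sig_face_true f b g d hcpt hadm hne
  · rw [face_congr f b g d (iff_of_false hγ not_false)] at hne ⊢
    exact sig_face_false f b g d hcpt hadm hne

theorem gam_face (g : V →ₗ[ℝ] ℝ) (d : ℝ) (hcpt : IsCompact (pol f b))
    (hadm : ∀ w ∈ extremePoints ℝ (pol f b), g w ≠ d) {S : Set ι} {γ : Prop}
    (hne : (Face f b S γ g d).Nonempty) :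
    gam g d (Face f b S γ g d) ↔ γ := by
  by_cases hγ : γ
  · rw [face_congr f b g d (iff_of_true hγ trivial)]
    exact iff_of_true (gam_face_true f b g d) hγ
  · rw [face_congr f b g d (iff_of_false hγ not_false)] at hne ⊢
    exact iff_of_false (gam_face_false f b g d hcpt hadm hne) hγ

theorem sigV_closed (g : V →ₗ[ℝ] ℝ) (d : ℝ) (hcpt : IsCompact (pol f b))
    (hadm : ∀ w ∈ extremePoints ℝ (pol f b), g w ≠ d) {A : Set V}
    (hA : IsExposed ℝ (trunc f b g d) A) (h : A.Nonempty) :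
    sigV f b (sig f b A) = sig f b A := by
  have hrep := rep f b hA h
  have hne : (Face f b (sig f b A) (gam g d A) g d).Nonempty := hrep ▸ h
  have h2 := sig_face f b g d hcpt hadm hne
  rw [← hrep] at h2
  exact h2.symm

theorem face_subset_iff (g : V →ₗ[ℝ] ℝ) (d : ℝ) (hcpt : IsCompact (pol f b))
    (hadm : ∀ w ∈ extremePoints ℝ (pol f b), g w ≠ d) {S T : Set ι} {γ δ : Prop}
    (hS : sigV f b S = S) (hT : sigV f b T = T)
    (hneS : (Face f b S γ g d).Nonempty) (hneT : (Face f b T δ g d).Nonempty) :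
    (Face f b S γ g d ⊆ Face f b T δ g d) ↔ (T ⊆ S ∧ (δ → γ)) := by
  constructor
  · intro hsub
    constructor
    · intro i hiT
      have hi' : i ∈ sig f b (Face f b S γ g d) := fun x hx => (hsub hx).1.2 i hiT
      rw [sig_face f b g d hcpt hadm hneS, hS] at hi'
      exact hi'
    · intro hδ
      have hg : gam g d (Face f b S γ g d) := fun x hx => (hsub hx).2.2 hδ
      exact (gam_face f b g d hcpt hadm hneS).1 hg
  · rintro ⟨hTS, hδγ⟩ x ⟨⟨hxp, hxS⟩, hxg, hxγ⟩
    exact ⟨⟨hxp, fun i hi => hxS i (hTS hi)⟩, hxg, fun hδ => hxγ (hδγ hδ)⟩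

theorem face_transfer (g₁ g₂ : V →ₗ[ℝ] ℝ) (d₁ d₂ : ℝ)
    (hcpt : IsCompact (pol f b))
    (hadm₁ : ∀ w ∈ extremePoints ℝ (pol f b), g₁ w ≠ d₁)
    (hadm₂ : ∀ w ∈ extremePoints ℝ (pol f b), g₂ w ≠ d₂)
    (hiff : ∀ w ∈ extremePoints ℝ (pol f b), (g₁ w < d₁ ↔ g₂ w < d₂))
    {S : Set ι} {γ : Prop}
    (hne : (Face f b S γ g₁ d₁).Nonempty) : (Face f b S γ g₂ d₂).Nonempty := by
  by_cases hγ : γ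
  · rw [face_congr f b g₁ d₁ (iff_of_true hγ trivial)] at hne
    rw [face_congr f b g₂ d₂ (iff_of_true hγ trivial),
      ne_true_iff f b g₂ d₂ hcpt hadm₂]
    obtain ⟨⟨u, hu, hu1⟩, ⟨v, hv, hv1⟩⟩ := (ne_true_iff f b g₁ d₁ hcpt hadm₁).1 hne
    refine ⟨⟨u, hu, (hiff u hu.1).1 hu1⟩, ⟨v, hv, ?_⟩⟩
    exact lt_of_le_of_ne (not_lt.1 (mt (hiff v hv.1).mpr (not_lt.2 hv1.le)))
      (Ne.symm (hadm₂ v hv.1))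
  · rw [face_congr f b g₁ d₁ (iff_of_false hγ not_false)] at hne
    rw [face_congr f b g₂ d₂ (iff_of_false hγ not_false),
      ne_false_iff f b g₂ d₂ hcpt hadm₂]
    obtain ⟨u, hu, hu1⟩ := (ne_false_iff f b g₁ d₁ hcpt hadm₁).1 hne
    exact ⟨u, hu, (hiff u hu.1).1 hu1⟩

end Stage4

section Stage5

variable (g₁ g₂ : V →ₗ[ℝ] ℝ) (d₁ d₂ : ℝ)

noncomputable def phi (hcpt : IsCompact (pol f b))
    (hadm₁ : ∀ w ∈ extremePoints ℝ (pol f b), g₁ w ≠ d₁)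
    (hadm₂ : ∀ w ∈ extremePoints ℝ (pol f b), g₂ w ≠ d₂)
    (hiff : ∀ w ∈ extremePoints ℝ (pol f b), (g₁ w < d₁ ↔ g₂ w < d₂)) :
    facePoset (trunc f b g₁ d₁) → facePoset (trunc f b g₂ d₂) := fun A =>
  letI : Decidable A.1.Nonempty := Classical.propDecidable _
  if h : A.1.Nonempty then
    ⟨Face f b (sig f b A.1) (gam g₁ d₁ A.1) g₂ d₂,
      exposed_face f b g₂ d₂
        (face_transfer f b g₁ g₂ d₁ d₂ hcpt hadm₁ hadm₂ hiff
          ((rep f b A.2 h) ▸ h))⟩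
  else ⟨∅, exposed_empty _⟩

variable (hcpt : IsCompact (pol f b))
    (hadm₁ : ∀ w ∈ extremePoints ℝ (pol f b), g₁ w ≠ d₁)
    (hadm₂ : ∀ w ∈ extremePoints ℝ (pol f b), g₂ w ≠ d₂)
    (hiff : ∀ w ∈ extremePoints ℝ (pol f b), (g₁ w < d₁ ↔ g₂ w < d₂))

theorem phi_val_pos (A : facePoset (trunc f b g₁ d₁)) (h : A.1.Nonempty) :
    (phi f b g₁ g₂ d₁ d₂ hcpt hadm₁ hadm₂ hiff A).1
      = Face f b (sig f b A.1) (gam g₁ d₁ A.1) g₂ d₂ := by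
  unfold phi; exact congrArg Subtype.val (dif_pos h)

theorem phi_val_neg (A : facePoset (trunc f b g₁ d₁)) (h : ¬ A.1.Nonempty) :
    (phi f b g₁ g₂ d₁ d₂ hcpt hadm₁ hadm₂ hiff A).1 = ∅ := by
  unfold phi; exact congrArg Subtype.val (dif_neg h)

theorem phi_phi
    (hiff' : ∀ w ∈ extremePoints ℝ (pol f b), (g₂ w < d₂ ↔ g₁ w < d₁))
    (A : facePoset (trunc f b g₁ d₁)) :
    phi f b g₂ g₁ d₂ d₁ hcpt hadm₂ hadm₁ hiff'
      (phi f b g₁ g₂ d₁ d₂ hcpt hadm₁ hadm₂ hiff A) = A := by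
  by_cases h : A.1.Nonempty
  · have hrep := rep f b A.2 h
    have hne1 : (Face f b (sig f b A.1) (gam g₁ d₁ A.1) g₁ d₁).Nonempty := hrep ▸ h
    have hne2 : (Face f b (sig f b A.1) (gam g₁ d₁ A.1) g₂ d₂).Nonempty :=
      face_transfer f b g₁ g₂ d₁ d₂ hcpt hadm₁ hadm₂ hiff hne1
    have e1 : (phi f b g₁ g₂ d₁ d₂ hcpt hadm₁ hadm₂ hiff A).1
        = Face f b (sig f b A.1) (gam g₁ d₁ A.1) g₂ d₂ :=
      phi_val_pos f b g₁ g₂ d₁ d₂ hcpt hadm₁ hadm₂ hiff A h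
    have h2 : (phi f b g₁ g₂ d₁ d₂ hcpt hadm₁ hadm₂ hiff A).1.Nonempty := by
      rw [e1]; exact hne2
    apply Subtype.ext
    rw [phi_val_pos f b g₂ g₁ d₂ d₁ hcpt hadm₂ hadm₁ hiff' _ h2, e1]
    have hs : sig f b (Face f b (sig f b A.1) (gam g₁ d₁ A.1) g₂ d₂) = sig f b A.1 := by
      rw [sig_face f b g₂ d₂ hcpt hadm₂ hne2]
      exact sigV_closed f b g₁ d₁ hcpt hadm₁ A.2 h
    have hg : gam g₂ d₂ (Face f b (sig f b A.1) (gam g₁ d₁ A.1) g₂ d₂)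
        ↔ gam g₁ d₁ A.1 := gam_face f b g₂ d₂ hcpt hadm₂ hne2
    rw [hs, face_congr f b g₁ d₁ hg, ← hrep]
  · apply Subtype.ext
    have e1 : (phi f b g₁ g₂ d₁ d₂ hcpt hadm₁ hadm₂ hiff A).1 = ∅ :=
      phi_val_neg f b g₁ g₂ d₁ d₂ hcpt hadm₁ hadm₂ hiff A h
    have h2 : ¬ (phi f b g₁ g₂ d₁ d₂ hcpt hadm₁ hadm₂ hiff A).1.Nonempty := by
      rw [e1]; simp
    rw [phi_val_neg f b g₂ g₁ d₂ d₁ hcpt hadm₂ hadm₁ hiff' _ h2]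
    exact (not_nonempty_iff_eq_empty.1 h).symm

theorem phi_le_iff (A B : facePoset (trunc f b g₁ d₁)) :
    phi f b g₁ g₂ d₁ d₂ hcpt hadm₁ hadm₂ hiff A
      ≤ phi f b g₁ g₂ d₁ d₂ hcpt hadm₁ hadm₂ hiff B ↔ A ≤ B := by
  have hle : ∀ (C D : facePoset (trunc f b g₂ d₂)), C ≤ D ↔ C.1 ⊆ D.1 :=
    fun C D => Iff.rfl
  have hle' : ∀ (C D : facePoset (trunc f b g₁ d₁)), C ≤ D ↔ C.1 ⊆ D.1 :=
    fun C D => Iff.rfl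
  by_cases hA : A.1.Nonempty
  · by_cases hB : B.1.Nonempty
    · have hrepA := rep f b A.2 hA
      have hrepB := rep f b B.2 hB
      have hneA1 : (Face f b (sig f b A.1) (gam g₁ d₁ A.1) g₁ d₁).Nonempty := hrepA ▸ hA
      have hneB1 : (Face f b (sig f b B.1) (gam g₁ d₁ B.1) g₁ d₁).Nonempty := hrepB ▸ hB
      have hneA2 := face_transfer f b g₁ g₂ d₁ d₂ hcpt hadm₁ hadm₂ hiff hneA1
      have hneB2 := face_transfer f b g₁ g₂ d₁ d₂ hcpt hadm₁ hadm₂ hiff hneB1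
      have hS : sigV f b (sig f b A.1) = sig f b A.1 :=
        sigV_closed f b g₁ d₁ hcpt hadm₁ A.2 hA
      have hT : sigV f b (sig f b B.1) = sig f b B.1 :=
        sigV_closed f b g₁ d₁ hcpt hadm₁ B.2 hB
      rw [hle, hle', phi_val_pos f b g₁ g₂ d₁ d₂ hcpt hadm₁ hadm₂ hiff A hA,
        phi_val_pos f b g₁ g₂ d₁ d₂ hcpt hadm₁ hadm₂ hiff B hB,
        face_subset_iff f b g₂ d₂ hcpt hadm₂ hS hT hneA2 hneB2]
      conv_rhs => rw [hrepA, hrepB]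
      exact (face_subset_iff f b g₁ d₁ hcpt hadm₁ hS hT hneA1 hneB1).symm
    · have hBe : B.1 = ∅ := not_nonempty_iff_eq_empty.1 hB
      have e2 : (phi f b g₁ g₂ d₁ d₂ hcpt hadm₁ hadm₂ hiff B).1 = ∅ :=
        phi_val_neg f b g₁ g₂ d₁ d₂ hcpt hadm₁ hadm₂ hiff B hB
      have e1 : (phi f b g₁ g₂ d₁ d₂ hcpt hadm₁ hadm₂ hiff A).1
          = Face f b (sig f b A.1) (gam g₁ d₁ A.1) g₂ d₂ :=
        phi_val_pos f b g₁ g₂ d₁ d₂ hcpt hadm₁ hadm₂ hiff A hA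
      have hneA2 := face_transfer f b g₁ g₂ d₁ d₂ hcpt hadm₁ hadm₂ hiff
        ((rep f b A.2 hA) ▸ hA)
      apply iff_of_false
      · rw [hle, e1, e2]
        intro hsub
        exact absurd (hsub hneA2.choose_spec) (by simp)
      · rw [hle', hBe]
        intro hsub
        exact absurd (hsub hA.choose_spec) (by simp)
  · have hAe : A.1 = ∅ := not_nonempty_iff_eq_empty.1 hA
    have e1 : (phi f b g₁ g₂ d₁ d₂ hcpt hadm₁ hadm₂ hiff A).1 = ∅ :=
      phi_val_neg f b g₁ g₂ d₁ d₂ hcpt hadm₁ hadm₂ hiff A hA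
    apply iff_of_true
    · rw [hle, e1]; exact empty_subset _
    · rw [hle', hAe]; exact empty_subset _

theorem main (hcpt : IsCompact (pol f b))
    (hadm₁ : ∀ w ∈ extremePoints ℝ (pol f b), g₁ w ≠ d₁)
    (hadm₂ : ∀ w ∈ extremePoints ℝ (pol f b), g₂ w ≠ d₂)
    (hiff : ∀ w ∈ extremePoints ℝ (pol f b), (g₁ w < d₁ ↔ g₂ w < d₂)) :
    Nonempty (facePoset (trunc f b g₁ d₁) ≃o facePoset (trunc f b g₂ d₂)) := by
  classical
  have hiff' : ∀ w ∈ extremePoints ℝ (pol f b), (g₂ w < d₂ ↔ g₁ w < d₁) :=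
    fun w hw => (hiff w hw).symm
  refine ⟨⟨⟨phi f b g₁ g₂ d₁ d₂ hcpt hadm₁ hadm₂ hiff,
    phi f b g₂ g₁ d₂ d₁ hcpt hadm₂ hadm₁ hiff', ?_, ?_⟩, ?_⟩⟩
  · intro A
    exact phi_phi f b g₁ g₂ d₁ d₂ hcpt hadm₁ hadm₂ hiff hiff' A
  · intro B
    exact phi_phi f b g₂ g₁ d₂ d₁ hcpt hadm₂ hadm₁ hiff' hiff B
  · intro A B
    exact phi_le_iff f b g₁ g₂ d₁ d₂ hcpt hadm₁ hadm₂ hiff A B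

end Stage5

end TruncProof

/-- Face truncation commutes with products: for simple polytopes `P` and `Q` and a
proper nonempty face `E` of `P`, the polytope `Π_E(P) × Q` is combinatorially
equivalent to `Π_{E×Q}(P × Q)`, where each truncation is performed by a halfspace
whose bounding hyperplane strictly separates the vertices of the truncated face
from the remaining vertices; and symmetrically `P × Π_F(Q)` is combinatorially
equivalent to `Π_{P×F}(P × Q)` for a face `F` of `Q`. -/
theorem truncation_commutes_with_products
    {d₁ d₂ : ℕ} {ιP ιQ : Type*} [Fintype ιP] [Fintype ιQ]
    (fP : ιP → (Fin d₁ → ℝ) →ₗ[ℝ] ℝ) (bP : ιP → ℝ)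
    (fQ : ιQ → (Fin d₂ → ℝ) →ₗ[ℝ] ℝ) (bQ : ιQ → ℝ)
    (P : Set (Fin d₁ → ℝ)) (Q : Set (Fin d₂ → ℝ))
    (hP : P = {x | ∀ i, fP i x ≤ bP i}) (hQ : Q = {y | ∀ i, fQ i y ≤ bQ i})
    (hPcpt : IsCompact P) (hQcpt : IsCompact Q)
    (hPsimple : ∀ x ∈ P,
      LinearIndependent ℝ (fun i : {i : ιP // fP i x = bP i} => fP i.1))
    (hQsimple : ∀ y ∈ Q,
      LinearIndependent ℝ (fun i : {i : ιQ // fQ i y = bQ i} => fQ i.1)) :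
    (∀ (E : Set (Fin d₁ → ℝ)), IsExposed ℝ P E → E.Nonempty → E ≠ P →
      ∀ (f : (Fin d₁ → ℝ) →ₗ[ℝ] ℝ) (c : ℝ),
        (∀ x ∈ Set.extremePoints ℝ P, (x ∈ E → c < f x) ∧ (x ∉ E → f x < c)) →
      ∀ (g : ((Fin d₁ → ℝ) × (Fin d₂ → ℝ)) →ₗ[ℝ] ℝ) (d : ℝ),
        (∀ z ∈ Set.extremePoints ℝ (P ×ˢ Q),
          (z.1 ∈ E → d < g z) ∧ (z.1 ∉ E → g z < d)) →
      Nonempty (facePoset ((P ∩ {x | f x ≤ c}) ×ˢ Q) ≃o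
                facePoset ((P ×ˢ Q) ∩ {z | g z ≤ d}))) ∧
    (∀ (F : Set (Fin d₂ → ℝ)), IsExposed ℝ Q F → F.Nonempty → F ≠ Q →
      ∀ (f : (Fin d₂ → ℝ) →ₗ[ℝ] ℝ) (c : ℝ),
        (∀ y ∈ Set.extremePoints ℝ Q, (y ∈ F → c < f y) ∧ (y ∉ F → f y < c)) →
      ∀ (g : ((Fin d₁ → ℝ) × (Fin d₂ → ℝ)) →ₗ[ℝ] ℝ) (d : ℝ),
        (∀ z ∈ Set.extremePoints ℝ (P ×ˢ Q),
          (z.2 ∈ F → d < g z) ∧ (z.2 ∉ F → g z < d)) →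
      Nonempty (facePoset (P ×ˢ (Q ∩ {y | f y ≤ c})) ≃o
                facePoset ((P ×ˢ Q) ∩ {z | g z ≤ d}))) := by
  classical
  constructor
  · intro E hE hEne hEP f c hf g d hg
    set F : (ιP ⊕ ιQ) → ((Fin d₁ → ℝ) × (Fin d₂ → ℝ)) →ₗ[ℝ] ℝ :=
      Sum.elim (fun i => (fP i).comp (LinearMap.fst ℝ _ _))
               (fun j => (fQ j).comp (LinearMap.snd ℝ _ _)) with hF
    set B : (ιP ⊕ ιQ) → ℝ := Sum.elim bP bQ with hB
    have hPQ : P ×ˢ Q = TruncProof.pol F B := by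
      ext z
      constructor
      · rintro ⟨hz1, hz2⟩
        rw [hP] at hz1; rw [hQ] at hz2
        rintro (i | j)
        · exact hz1 i
        · exact hz2 j
      · intro h
        constructor
        · rw [hP]; exact fun i => h (Sum.inl i)
        · rw [hQ]; exact fun j => h (Sum.inr j)
    have hcpt : IsCompact (TruncProof.pol F B) := hPQ ▸ hPcpt.prod hQcpt
    set g₁ : ((Fin d₁ → ℝ) × (Fin d₂ → ℝ)) →ₗ[ℝ] ℝ :=
      f.comp (LinearMap.fst ℝ _ _) with hg₁
    have hext : extremePoints ℝ (TruncProof.pol F B)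
        = (extremePoints ℝ P) ×ˢ (extremePoints ℝ Q) := by
      rw [← hPQ, extremePoints_prod]
    have hadm₁ : ∀ w ∈ extremePoints ℝ (TruncProof.pol F B), g₁ w ≠ c := by
      intro w hw
      have hw1 : w.1 ∈ extremePoints ℝ P := by
        rw [hext] at hw; exact hw.1
      rcases hf w.1 hw1 with ⟨h1, h2⟩
      by_cases hwE : w.1 ∈ E
      · exact ne_of_gt (h1 hwE)
      · exact ne_of_lt (h2 hwE)
    have hadm₂ : ∀ w ∈ extremePoints ℝ (TruncProof.pol F B), g w ≠ d := by
      intro w hw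
      have hw' : w ∈ extremePoints ℝ (P ×ˢ Q) := by rw [hPQ]; exact hw
      rcases hg w hw' with ⟨h1, h2⟩
      by_cases hwE : w.1 ∈ E
      · exact ne_of_gt (h1 hwE)
      · exact ne_of_lt (h2 hwE)
    have hiff : ∀ w ∈ extremePoints ℝ (TruncProof.pol F B),
        (g₁ w < c ↔ g w < d) := by
      intro w hw
      have hw' : w ∈ extremePoints ℝ (P ×ˢ Q) := by rw [hPQ]; exact hw
      have hw1 : w.1 ∈ extremePoints ℝ P := by
        rw [hext] at hw; exact hw.1
      rcases hf w.1 hw1 with ⟨hf1, hf2⟩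
      rcases hg w hw' with ⟨hg1, hg2⟩
      by_cases hwE : w.1 ∈ E
      · exact iff_of_false (not_lt.2 (le_of_lt (hf1 hwE))) (not_lt.2 (le_of_lt (hg1 hwE)))
      · exact iff_of_true (hf2 hwE) (hg2 hwE)
    obtain ⟨iso⟩ := TruncProof.main F B g₁ g c d hcpt hadm₁ hadm₂ hiff
    have e1 : (P ∩ {x | f x ≤ c}) ×ˢ Q = TruncProof.trunc F B g₁ c := by
      ext z
      have hz := Set.ext_iff.1 hPQ z
      simp only [Set.mem_prod, mem_inter_iff, mem_setOf_eq] at hz ⊢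
      constructor
      · rintro ⟨⟨h1, h2⟩, h3⟩
        exact ⟨hz.1 ⟨h1, h3⟩, h2⟩
      · rintro ⟨h1, h2⟩
        obtain ⟨h3, h4⟩ := hz.2 h1
        exact ⟨⟨h3, h2⟩, h4⟩
    have e2 : (P ×ˢ Q) ∩ {z | g z ≤ d} = TruncProof.trunc F B g d := by
      rw [hPQ]
      ext z
      simp only [mem_inter_iff, mem_setOf_eq]
      exact Iff.rfl
    exact ⟨(facePoset_congr e1).trans (iso.trans (facePoset_congr e2).symm)⟩
  · intro Fq hE hEne hEP f c hf g d hg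
    set F : (ιP ⊕ ιQ) → ((Fin d₁ → ℝ) × (Fin d₂ → ℝ)) →ₗ[ℝ] ℝ :=
      Sum.elim (fun i => (fP i).comp (LinearMap.fst ℝ _ _))
               (fun j => (fQ j).comp (LinearMap.snd ℝ _ _)) with hF
    set B : (ιP ⊕ ιQ) → ℝ := Sum.elim bP bQ with hB
    have hPQ : P ×ˢ Q = TruncProof.pol F B := by
      ext z
      constructor
      · rintro ⟨hz1, hz2⟩
        rw [hP] at hz1; rw [hQ] at hz2
        rintro (i | j)
        · exact hz1 i
        · exact hz2 j
      · intro h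
        constructor
        · rw [hP]; exact fun i => h (Sum.inl i)
        · rw [hQ]; exact fun j => h (Sum.inr j)
    have hcpt : IsCompact (TruncProof.pol F B) := hPQ ▸ hPcpt.prod hQcpt
    set g₁ : ((Fin d₁ → ℝ) × (Fin d₂ → ℝ)) →ₗ[ℝ] ℝ :=
      f.comp (LinearMap.snd ℝ _ _) with hg₁
    have hext : extremePoints ℝ (TruncProof.pol F B)
        = (extremePoints ℝ P) ×ˢ (extremePoints ℝ Q) := by
      rw [← hPQ, extremePoints_prod]
    have hadm₁ : ∀ w ∈ extremePoints ℝ (TruncProof.pol F B), g₁ w ≠ c := by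
      intro w hw
      have hw2 : w.2 ∈ extremePoints ℝ Q := by
        rw [hext] at hw; exact hw.2
      rcases hf w.2 hw2 with ⟨h1, h2⟩
      by_cases hwE : w.2 ∈ Fq
      · exact ne_of_gt (h1 hwE)
      · exact ne_of_lt (h2 hwE)
    have hadm₂ : ∀ w ∈ extremePoints ℝ (TruncProof.pol F B), g w ≠ d := by
      intro w hw
      have hw' : w ∈ extremePoints ℝ (P ×ˢ Q) := by rw [hPQ]; exact hw
      rcases hg w hw' with ⟨h1, h2⟩
      by_cases hwE : w.2 ∈ Fq
      · exact ne_of_gt (h1 hwE)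
      · exact ne_of_lt (h2 hwE)
    have hiff : ∀ w ∈ extremePoints ℝ (TruncProof.pol F B),
        (g₁ w < c ↔ g w < d) := by
      intro w hw
      have hw' : w ∈ extremePoints ℝ (P ×ˢ Q) := by rw [hPQ]; exact hw
      have hw2 : w.2 ∈ extremePoints ℝ Q := by
        rw [hext] at hw; exact hw.2
      rcases hf w.2 hw2 with ⟨hf1, hf2⟩
      rcases hg w hw' with ⟨hg1, hg2⟩
      by_cases hwE : w.2 ∈ Fq
      · exact iff_of_false (not_lt.2 (le_of_lt (hf1 hwE))) (not_lt.2 (le_of_lt (hg1 hwE)))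
      · exact iff_of_true (hf2 hwE) (hg2 hwE)
    obtain ⟨iso⟩ := TruncProof.main F B g₁ g c d hcpt hadm₁ hadm₂ hiff
    have e1 : P ×ˢ (Q ∩ {y | f y ≤ c}) = TruncProof.trunc F B g₁ c := by
      ext z
      have hz := Set.ext_iff.1 hPQ z
      simp only [Set.mem_prod, mem_inter_iff, mem_setOf_eq] at hz ⊢
      constructor
      · rintro ⟨h1, ⟨h2, h3⟩⟩
        exact ⟨hz.1 ⟨h1, h2⟩, h3⟩
      · rintro ⟨h1, h2⟩
        obtain ⟨h3, h4⟩ := hz.2 h1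
        exact ⟨h3, h4, h2⟩
    have e2 : (P ×ˢ Q) ∩ {z | g z ≤ d} = TruncProof.trunc F B g d := by
      rw [hPQ]
      ext z
      simp only [mem_inter_iff, mem_setOf_eq]
      exact Iff.rfl
    exact ⟨(facePoset_congr e1).trans (iso.trans (facePoset_congr e2).symm)⟩
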